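/- Under the same setting as follows: X ⊆ ℝ^n, Y ⊆ ℝ^m nonempty compact convex with Y of diameter at most D_y; p, q proper closed convex with dom p = X, dom q = Y; h differentiable with L-Lipschitz gradient on X×Y and h(x,·) concave for each x ∈ X; H(x,y) = h(x,y)+p(x)−q(y); ε > 0, ε̂₀ > 0, ε̂_k = ε̂₀/(k+1), x⁰ = x̂⁰ ∈ X, ŷ⁰ ∈ Y, h_k(x,y) = h(x,y) − ε‖y−ŷ⁰‖²/(4D_y) + L‖x−x^k‖², and (x^{k+1}, y^{k+1}) ∈ X×Y an ε̂_k-primal-dual stationary point of min_x max_y {h_k(x,y)+p(x)−q(y)} for each 0 ≤ k ≤ K. Then sup_{y∈Y} H(x^{K+1}, y) ≤ sup_{y∈Y} H(x̂⁰, y) + εD_y/4 + 2ε̂₀²(L^{-1} + 4D_y²L·ε^{-2}). -/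

import Mathlib

open Set Filter Topology InnerProductSpace RealInnerProductSpace

variable {F : Type*} [NormedAddCommGroup F] [InnerProductSpace ℝ F] [CompleteSpace F]

lemma aux_line {f : F → ℝ} {g c d : F} {t : ℝ} (hf : HasGradientAt f g (c + t • d)) :
    HasDerivAt (fun τ : ℝ => f (c + τ • d)) (⟪g, d⟫_ℝ) t := by
  have h1 : HasDerivAt (fun τ : ℝ => c + τ • d) d t := by
    simpa using ((hasDerivAt_id t).smul_const d).const_add c
  have h2 := (hasGradientAt_iff_hasFDerivAt.mp hf).comp_hasDerivAt t h1
  simpa [toDual_apply_apply, Function.comp_def] using h2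

lemma aux_descent {s : Set F} (hs : Convex ℝ s) {f : F → ℝ} {g : F → F}
    (hg : ∀ z ∈ s, HasGradientAt f (g z) z) {L : ℝ} (hL : 0 ≤ L)
    (hlip : ∀ z ∈ s, ∀ z' ∈ s, ‖g z - g z'‖ ≤ L * ‖z - z'‖)
    {x1 x2 : F} (h1 : x1 ∈ s) (h2 : x2 ∈ s) :
    f x1 + ⟪g x1, x2 - x1⟫_ℝ - L / 2 * ‖x2 - x1‖ ^ 2 ≤ f x2 := by
  set d := x2 - x1 with hd
  have hmem : ∀ t ∈ Icc (0:ℝ) 1, x1 + t • d ∈ s := fun t ht =>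
    hs.add_smul_sub_mem h1 h2 ht
  set χ : ℝ → ℝ := fun t => f (x1 + t • d) - t * ⟪g x1, d⟫_ℝ + L / 2 * ‖d‖ ^ 2 * t ^ 2 with hχ
  have key : ∀ t ∈ Icc (0:ℝ) 1, HasDerivAt χ
      (⟪g (x1 + t • d), d⟫_ℝ - ⟪g x1, d⟫_ℝ + L / 2 * ‖d‖ ^ 2 * (2 * t)) t := by
    intro t ht
    have hline := aux_line (f := f) (hg _ (hmem t ht))
    have hb : HasDerivAt (fun τ : ℝ => τ * ⟪g x1, d⟫_ℝ) (⟪g x1, d⟫_ℝ) t := by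
      simpa using (hasDerivAt_id t).mul_const (⟪g x1, d⟫_ℝ)
    have hc : HasDerivAt (fun τ : ℝ => L / 2 * ‖d‖ ^ 2 * τ ^ 2)
        (L / 2 * ‖d‖ ^ 2 * (2 * t)) t := by
      have := (hasDerivAt_pow 2 t).const_mul (L / 2 * ‖d‖ ^ 2)
      convert this using 1
      · rfl
      · rfl
      push_cast
      norm_num
    exact (hline.sub hb).add hc
  have hderiv_nonneg : ∀ t ∈ interior (Icc (0:ℝ) 1), 0 ≤ deriv χ t := by
    intro t ht
    rw [interior_Icc] at ht
    have htI : t ∈ Icc (0:ℝ) 1 := ⟨ht.1.le, ht.2.le⟩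
    rw [(key t htI).deriv]
    have h3 : ⟪g x1, d⟫_ℝ - ⟪g (x1 + t • d), d⟫_ℝ ≤ L * t * ‖d‖ ^ 2 := by
      have := real_inner_le_norm (g x1 - g (x1 + t • d)) d
      have hlipb : ‖g x1 - g (x1 + t • d)‖ ≤ L * (t * ‖d‖) := by
        have := hlip x1 h1 _ (hmem t htI)
        simpa [norm_smul, abs_of_nonneg ht.1.le] using this
      have hnd : (0:ℝ) ≤ ‖d‖ := norm_nonneg _
      have : ⟪g x1 - g (x1 + t • d), d⟫_ℝ ≤ L * (t * ‖d‖) * ‖d‖ :=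
        le_trans (real_inner_le_norm _ _) (by
          exact mul_le_mul_of_nonneg_right hlipb hnd)
      rw [inner_sub_left] at this
      nlinarith
    nlinarith
  have hmono : MonotoneOn χ (Icc (0:ℝ) 1) := by
    apply monotoneOn_of_deriv_nonneg (convex_Icc 0 1)
    · exact fun t ht => (key t ht).continuousAt.continuousWithinAt
    · intro t ht
      rw [interior_Icc] at ht
      exact ((key t ⟨ht.1.le, ht.2.le⟩).differentiableAt).differentiableWithinAt
    · exact hderiv_nonneg
  have h01 := hmono (left_mem_Icc.mpr zero_le_one) (right_mem_Icc.mpr zero_le_one) zero_le_one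
  simp only [hχ] at h01
  have e0 : x1 + (0:ℝ) • d = x1 := by simp
  have e1 : x1 + (1:ℝ) • d = x2 := by simp [hd]
  rw [e0, e1] at h01
  nlinarith [h01]

lemma aux_concave {s : Set F} {f : F → ℝ} {g w : F} (hf : ConcaveOn ℝ s f)
    (hg : HasGradientAt f g w) (hw : w ∈ s) {v : F} (hv : v ∈ s) :
    f v ≤ f w + ⟪g, v - w⟫_ℝ := by
  set d := v - w with hd
  have hline : HasDerivAt (fun t : ℝ => f (w + t • d)) (⟪g, d⟫_ℝ) 0 :=
    aux_line (by simpa using hg)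
  have htend : Tendsto (slope (fun t : ℝ => f (w + t • d)) 0) (𝓝[>] 0) (𝓝 ⟪g, d⟫_ℝ) :=
    (hasDerivAt_iff_tendsto_slope.mp hline).mono_left
      (nhdsWithin_mono 0 (fun t ht => ne_of_gt ht))
  refine sub_le_iff_le_add'.mp (ge_of_tendsto htend ?_)
  filter_upwards [Ioo_mem_nhdsGT (zero_lt_one)] with t ht
  have hcc : (1 - t) * f w + t * f v ≤ f (w + t • d) := by
    have := hf.2 hw hv (by linarith [ht.1, ht.2] : (0:ℝ) ≤ 1 - t) ht.1.le (by ring)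
    have he : (1 - t) • w + t • v = w + t • d := by
      rw [hd]; module
    rw [he] at this
    simpa using this
  rw [slope_def_field]
  simp only [zero_smul, add_zero, sub_zero]
  rw [le_div_iff₀ ht.1]
  nlinarith [ht.1]

set_option maxHeartbeats 1000000 in
/-- The output of the inexact proximal point method (Algorithm 2) does
not increase the primal value `max_y H(·,y)`, `H(x,y) = h(x,y)+p(x)−q(y)`, by more than
`εD_y/4 + 2ε̂₀²(L⁻¹ + 4D_y²L ε⁻²)`. -/
theorem primal_value_no_increase {n m : ℕ}
    (X : Set (EuclideanSpace ℝ (Fin n))) (Y : Set (EuclideanSpace ℝ (Fin m)))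
    (Dy : ℝ) (hDy : 0 < Dy)
    (hXne : X.Nonempty) (hXcp : IsCompact X) (hXcv : Convex ℝ X)
    (hYne : Y.Nonempty) (hYcp : IsCompact Y) (hYcv : Convex ℝ Y)
    (hdY : ∀ u ∈ Y, ∀ v ∈ Y, ‖u - v‖ ≤ Dy)
    (p : EuclideanSpace ℝ (Fin n) → ℝ) (q : EuclideanSpace ℝ (Fin m) → ℝ)
    (hpcvx : ConvexOn ℝ X p) (hplsc : LowerSemicontinuousOn p X)
    (hqcvx : ConvexOn ℝ Y q) (hqlsc : LowerSemicontinuousOn q Y)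
    (h : EuclideanSpace ℝ (Fin n) → EuclideanSpace ℝ (Fin m) → ℝ)
    (gx : EuclideanSpace ℝ (Fin n) → EuclideanSpace ℝ (Fin m) → EuclideanSpace ℝ (Fin n))
    (gy : EuclideanSpace ℝ (Fin n) → EuclideanSpace ℝ (Fin m) → EuclideanSpace ℝ (Fin m))
    (L : ℝ) (hL : 0 < L)
    (hgx : ∀ x ∈ X, ∀ y ∈ Y, HasGradientAt (fun x' => h x' y) (gx x y) x)
    (hgy : ∀ x ∈ X, ∀ y ∈ Y, HasGradientAt (fun y' => h x y') (gy x y) y)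
    (hLip : ∀ x ∈ X, ∀ y ∈ Y, ∀ x' ∈ X, ∀ y' ∈ Y,
      ‖gx x y - gx x' y'‖ ^ 2 + ‖gy x y - gy x' y'‖ ^ 2
        ≤ L ^ 2 * (‖x - x'‖ ^ 2 + ‖y - y'‖ ^ 2))
    (hconc : ∀ x ∈ X, ConcaveOn ℝ Y (fun y => h x y))
    (ε εh0 : ℝ) (hε : 0 < ε) (hεh0 : 0 < εh0)
    (xh0 : EuclideanSpace ℝ (Fin n)) (hxh0 : xh0 ∈ X)
    (y0 : EuclideanSpace ℝ (Fin m)) (hy0 : y0 ∈ Y)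
    (K : ℕ)
    (x : ℕ → EuclideanSpace ℝ (Fin n)) (y : ℕ → EuclideanSpace ℝ (Fin m))
    (hx0 : x 0 = xh0)
    (hmem : ∀ k, x k ∈ X ∧ y k ∈ Y)
    -- for each 0 ≤ k ≤ K, (x^{k+1}, y^{k+1}) is an ε̂_k-primal-dual stationary point of
    -- min_x max_y {h_k(x,y)+p(x)−q(y)}, h_k(x,y) = h(x,y) − ε‖y−ŷ⁰‖²/(4D_y) + L‖x−x^k‖²
    (hstat : ∀ k ≤ K, ∃ s t,
      (∀ u ∈ X, p (x (k+1)) + @inner ℝ _ _ s (u - x (k+1)) ≤ p u)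
      ∧ (∀ v ∈ Y, q (y (k+1)) + @inner ℝ _ _ t (v - y (k+1)) ≤ q v)
      ∧ ‖gx (x (k+1)) (y (k+1)) + (2 * L) • (x (k+1) - x k) + s‖ ≤ εh0 / (k + 1)
      ∧ ‖gy (x (k+1)) (y (k+1)) - (ε / (2 * Dy)) • (y (k+1) - y0) - t‖ ≤ εh0 / (k + 1)) :
    sSup ((fun y' => h (x (K+1)) y' + p (x (K+1)) - q y') '' Y)
      ≤ sSup ((fun y' => h xh0 y' + p xh0 - q y') '' Y)
        + ε * Dy / 4 + 2 * εh0 ^ 2 * (L⁻¹ + 4 * Dy ^ 2 * L / ε ^ 2) := by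
  classical
  set a : ℝ := ε / (4 * Dy) with ha
  have hapos : 0 < a := by positivity
  set G : EuclideanSpace ℝ (Fin n) → EuclideanSpace ℝ (Fin m) → ℝ :=
    fun x' v => h x' v - a * ‖v - y0‖ ^ 2 + p x' - q v with hG
  set ψ : EuclideanSpace ℝ (Fin n) → ℝ := fun x' => sSup (G x' '' Y) with hψ
  have hxmem : ∀ k, x k ∈ X := fun k => (hmem k).1
  have hymem : ∀ k, y k ∈ Y := fun k => (hmem k).2
  -- continuity of h x' on Y
  have hcont : ∀ x' ∈ X, ContinuousOn (fun v => h x' v) Y := by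
    intro x' hx' v hv
    exact ((hgy x' hx' v hv).differentiableAt.continuousAt).continuousWithinAt
  -- lower bound for q on Y
  obtain ⟨s0, t0, hs0, ht0, hr10, hr20⟩ := hstat 0 (Nat.zero_le K)
  set cq : ℝ := q (y 1) - ‖t0‖ * Dy with hcq
  have hqlb : ∀ v ∈ Y, cq ≤ q v := by
    intro v hv
    have h1 := ht0 v hv
    have h2 : -(‖t0‖ * ‖v - y 1‖) ≤ ⟪t0, v - y 1⟫_ℝ := by
      have := abs_real_inner_le_norm t0 (v - y 1)
      cases abs_le.mp this with
      | intro hl hr => linarith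
    have h3 : ‖t0‖ * ‖v - y 1‖ ≤ ‖t0‖ * Dy :=
      mul_le_mul_of_nonneg_left (hdY v hv (y 1) (hymem 1)) (norm_nonneg _)
    rw [hcq]; linarith
  -- BddAbove of the regularized images
  have bddG : ∀ x' ∈ X, BddAbove (G x' '' Y) := by
    intro x' hx'
    have hc : ContinuousOn (fun v => h x' v - a * ‖v - y0‖ ^ 2) Y := by
      apply (hcont x' hx').sub
      exact (continuous_const.mul ((continuous_norm.comp
        (continuous_id.sub continuous_const)).pow 2)).continuousOn
    obtain ⟨M, hM⟩ := (hYcp.image_of_continuousOn hc).bddAbove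
    refine ⟨M + p x' - cq, ?_⟩
    rintro _ ⟨v, hv, rfl⟩
    have h1 : h x' v - a * ‖v - y0‖ ^ 2 ≤ M := hM ⟨v, hv, rfl⟩
    have h2 := hqlb v hv
    simp only [hG]
    linarith
  have bddH : ∀ x' ∈ X, BddAbove ((fun v => h x' v + p x' - q v) '' Y) := by
    intro x' hx'
    obtain ⟨M, hM⟩ := (hYcp.image_of_continuousOn (hcont x' hx')).bddAbove
    refine ⟨M + p x' - cq, ?_⟩
    rintro _ ⟨v, hv, rfl⟩
    have h1 : h x' v ≤ M := hM ⟨v, hv, rfl⟩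
    have h2 := hqlb v hv
    show h x' v + p x' - q v ≤ M + p x' - cq
    linarith
  -- Lipschitz bounds for partial gradients
  have hlipx : ∀ w ∈ Y, ∀ z ∈ X, ∀ z' ∈ X, ‖gx z w - gx z' w‖ ≤ L * ‖z - z'‖ := by
    intro w hw z hz z' hz'
    have := hLip z hz w hw z' hz' w hw
    simp only [sub_self, norm_zero] at this
    have hsq : ‖gx z w - gx z' w‖ ^ 2 ≤ (L * ‖z - z'‖) ^ 2 := by nlinarith [sq_nonneg (‖gy z w - gy z' w‖)]
    exact (pow_le_pow_iff_left₀ (norm_nonneg (gx z w - gx z' w))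
      (by positivity : (0:ℝ) ≤ L * ‖z - z'‖) two_ne_zero).mp hsq
  -- the per-step inequality
  set C : ℝ := Dy / ε + 1 / (6 * L) with hC
  have key : ∀ k ≤ K, ψ (x (k+1)) ≤ ψ (x k) + εh0 ^ 2 * C * ((1:ℝ) / ((k:ℝ)+1) ^ 2) := by
    intro k hk
    obtain ⟨s, t, hsp, hqt, r1, r2⟩ := hstat k hk
    set ek : ℝ := εh0 / (k+1) with hek
    have hekpos : 0 < ek := by positivity
    set w := y (k+1) with hw'
    have hw : w ∈ Y := hymem (k+1)
    have hx1 : x (k+1) ∈ X := hxmem (k+1)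
    have hxk : x k ∈ X := hxmem k
    -- y-side
    have claim1 : ∀ v ∈ Y, G (x (k+1)) v ≤ G (x (k+1)) w + ek ^ 2 * (Dy / ε) := by
      intro v hv
      have hcon : h (x (k+1)) v ≤ h (x (k+1)) w + ⟪gy (x (k+1)) w, v - w⟫_ℝ :=
        aux_concave (hconc _ hx1) (hgy _ hx1 w hw) hw hv
      have hq := hqt v hv
      have hid : ‖v - y0‖ ^ 2 = ‖w - y0‖ ^ 2 + 2 * ⟪w - y0, v - w⟫_ℝ + ‖v - w‖ ^ 2 := by
        have := norm_add_sq_real (w - y0) (v - w)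
        have he : (w - y0) + (v - w) = v - y0 := by abel
        rw [he] at this
        linarith
      have hres : ⟪gy (x (k+1)) w, v - w⟫_ℝ - 2 * a * ⟪w - y0, v - w⟫_ℝ - ⟪t, v - w⟫_ℝ
          ≤ ek * ‖v - w‖ := by
        have h1 : ⟪gy (x (k+1)) w - (ε / (2 * Dy)) • (w - y0) - t, v - w⟫_ℝ
            ≤ ‖gy (x (k+1)) w - (ε / (2 * Dy)) • (w - y0) - t‖ * ‖v - w‖ :=
          real_inner_le_norm _ _
        have h2 : ‖gy (x (k+1)) w - (ε / (2 * Dy)) • (w - y0) - t‖ * ‖v - w‖ ≤ ek * ‖v - w‖ :=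
          mul_le_mul_of_nonneg_right r2 (norm_nonneg _)
        have h3 : ⟪gy (x (k+1)) w - (ε / (2 * Dy)) • (w - y0) - t, v - w⟫_ℝ
            = ⟪gy (x (k+1)) w, v - w⟫_ℝ - (ε / (2 * Dy)) * ⟪w - y0, v - w⟫_ℝ - ⟪t, v - w⟫_ℝ := by
          rw [inner_sub_left, inner_sub_left, real_inner_smul_left]
        have h4 : ε / (2 * Dy) = 2 * a := by rw [ha]; ring
        have h5 := le_trans h1 h2
        rw [h3, h4] at h5
        linarith
      have hquad : ek * ‖v - w‖ - a * ‖v - w‖ ^ 2 ≤ ek ^ 2 * (Dy / ε) := by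
        have h5 : ek ^ 2 / (4 * a) = ek ^ 2 * (Dy / ε) := by
          rw [ha]; field_simp
        have := sq_nonneg (2 * a * ‖v - w‖ - ek)
        rw [← h5]
        rw [le_div_iff₀ (by positivity : (0:ℝ) < 4 * a)]
        nlinarith
      have hid' : a * ‖v - y0‖ ^ 2
          = a * ‖w - y0‖ ^ 2 + 2 * a * ⟪w - y0, v - w⟫_ℝ + a * ‖v - w‖ ^ 2 := by
        rw [hid]; ring
      show h (x (k+1)) v - a * ‖v - y0‖ ^ 2 + p (x (k+1)) - q v
        ≤ h (x (k+1)) w - a * ‖w - y0‖ ^ 2 + p (x (k+1)) - q w + ek ^ 2 * (Dy / ε)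
      linarith
    have step1 : ψ (x (k+1)) ≤ G (x (k+1)) w + ek ^ 2 * (Dy / ε) := by
      show sSup (G (x (k+1)) '' Y) ≤ G (x (k+1)) w + ek ^ 2 * (Dy / ε)
      apply csSup_le (hYne.image _)
      rintro _ ⟨v, hv, rfl⟩
      exact claim1 v hv
    -- x-side
    have hdesc : h (x (k+1)) w + ⟪gx (x (k+1)) w, x k - x (k+1)⟫_ℝ
        - L / 2 * ‖x k - x (k+1)‖ ^ 2 ≤ h (x k) w :=
      aux_descent hXcv (fun z hz => hgx z hz w hw) hL.le
        (fun z hz z' hz' => hlipx w hw z hz z' hz') hx1 hxk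
    have hp := hsp (x k) hxk
    set dd := x k - x (k+1) with hdd
    set rr : ℝ := ‖dd‖ with hrr
    have hres2 : -(ek * rr) ≤ ⟪gx (x (k+1)) w, dd⟫_ℝ + ⟪s, dd⟫_ℝ - 2 * L * rr ^ 2 := by
      have h1 : -(‖gx (x (k+1)) w + (2 * L) • (x (k+1) - x k) + s‖ * ‖dd‖)
          ≤ ⟪gx (x (k+1)) w + (2 * L) • (x (k+1) - x k) + s, dd⟫_ℝ := by
        have := abs_real_inner_le_norm (gx (x (k+1)) w + (2 * L) • (x (k+1) - x k) + s) dd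
        cases abs_le.mp this with
        | intro hl hr => linarith
      have h2 : ⟪gx (x (k+1)) w + (2 * L) • (x (k+1) - x k) + s, dd⟫_ℝ
          = ⟪gx (x (k+1)) w, dd⟫_ℝ + 2 * L * ⟪x (k+1) - x k, dd⟫_ℝ + ⟪s, dd⟫_ℝ := by
        rw [inner_add_left, inner_add_left, real_inner_smul_left]
      have h3 : ⟪x (k+1) - x k, dd⟫_ℝ = -(rr ^ 2) := by
        rw [hrr, hdd]
        rw [show x (k+1) - x k = -(x k - x (k+1)) by abel]
        rw [inner_neg_left, real_inner_self_eq_norm_sq]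
      have h4 : ‖gx (x (k+1)) w + (2 * L) • (x (k+1) - x k) + s‖ * ‖dd‖ ≤ ek * rr :=
        mul_le_mul_of_nonneg_right r1 (norm_nonneg _)
      rw [h2, h3] at h1
      rw [hrr] at h4 ⊢
      nlinarith
    have hquad2 : -(ek ^ 2 / (6 * L)) ≤ -(ek * rr) + 3 * L / 2 * rr ^ 2 := by
      rw [← sub_nonneg]
      have hident : -(ek * rr) + 3 * L / 2 * rr ^ 2 - -(ek ^ 2 / (6 * L))
          = (3 * L * rr - ek) ^ 2 / (6 * L) := by
        field_simp
        ring
      rw [hident]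
      positivity
    have claim2 : G (x (k+1)) w ≤ G (x k) w + ek ^ 2 / (6 * L) := by
      show h (x (k+1)) w - a * ‖w - y0‖ ^ 2 + p (x (k+1)) - q w
        ≤ h (x k) w - a * ‖w - y0‖ ^ 2 + p (x k) - q w + ek ^ 2 / (6 * L)
      linarith [hdesc, hp, hres2, hquad2]
    have step2 : G (x k) w ≤ ψ (x k) :=
      le_csSup (bddG (x k) hxk) (Set.mem_image_of_mem _ hw)
    have hsum : ek ^ 2 * (Dy / ε) + ek ^ 2 / (6 * L)
        = εh0 ^ 2 * C * ((1:ℝ) / ((k:ℝ)+1) ^ 2) := by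
      rw [hek, hC]
      have hk0 : ((k:ℝ)+1) ≠ 0 := by positivity
      field_simp
    clear_value a G ψ C ek w dd rr
    linarith
  -- telescoping
  have sumle : ∀ j : ℕ, (∑ i ∈ Finset.range j, (1:ℝ) / (i+1) ^ 2) ≤ 2 - 2 / ((j:ℝ)+1) := by
    intro j
    induction j with
    | zero => simp
    | succ j ih =>
      rw [Finset.sum_range_succ]
      have hj1 : (0:ℝ) < (j:ℝ) + 1 := by positivity
      have hj2 : (0:ℝ) < (j:ℝ) + 2 := by positivity
      have h1 : (1:ℝ) / ((j:ℝ)+1) ^ 2 ≤ 2 / (((j:ℝ)+1) * ((j:ℝ)+2)) := by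
        rw [div_le_div_iff₀ (by positivity) (by positivity)]
        nlinarith
      have h2 : 2 / (((j:ℝ)+1) * ((j:ℝ)+2)) = 2 / ((j:ℝ)+1) - 2 / ((j:ℝ)+2) := by
        field_simp
        ring
      have h3 : 2 / ((j:ℝ)+1+1) = 2 / ((j:ℝ)+2) := by ring
      push_cast
      push_cast at ih
      linarith [ih]
  have tele : ∀ j, j ≤ K + 1 → ψ (x j) ≤ ψ (x 0)
      + εh0 ^ 2 * C * (∑ i ∈ Finset.range j, (1:ℝ) / (i+1) ^ 2) := by
    intro j hj
    induction j with
    | zero => simp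
    | succ j ih =>
      have hjK : j ≤ K := Nat.lt_succ_iff.mp hj
      have h1 := key j hjK
      have h2 := ih (Nat.le_of_succ_le hj)
      rw [Finset.sum_range_succ]
      push_cast at h1 ⊢
      clear_value a G ψ C
      linarith
  have hCpos : 0 < C := by rw [hC]; positivity
  have hsum2 : (∑ i ∈ Finset.range (K+1), (1:ℝ) / (i+1) ^ 2) ≤ 2 := by
    have h0 := sumle (K+1)
    push_cast at h0
    have h1 : (0:ℝ) ≤ 2 / ((K:ℝ)+1+1) := by positivity
    linarith
  have hfin : ψ (x (K+1)) ≤ ψ (x 0) + 2 * εh0 ^ 2 * C := by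
    have h1 := tele (K+1) le_rfl
    have h2 : εh0 ^ 2 * C * (∑ i ∈ Finset.range (K+1), (1:ℝ) / (i+1) ^ 2)
        ≤ εh0 ^ 2 * C * 2 := mul_le_mul_of_nonneg_left hsum2 (mul_nonneg (sq_nonneg _) hCpos.le)
    clear_value a G ψ C
    linarith
  -- constant comparison
  have hCbound : C ≤ L⁻¹ + 4 * Dy ^ 2 * L / ε ^ 2 := by
    have keyc : 6 * L * Dy * ε + ε ^ 2 ≤ 6 * ε ^ 2 + 24 * Dy ^ 2 * L ^ 2 := by
      nlinarith [sq_nonneg (ε - L * Dy), sq_nonneg ε, sq_nonneg (L * Dy)]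
    have h1 : C = (6 * L * Dy * ε + ε ^ 2) / (6 * L * ε ^ 2) := by
      rw [hC]; field_simp
    have h2 : L⁻¹ + 4 * Dy ^ 2 * L / ε ^ 2 = (6 * ε ^ 2 + 24 * Dy ^ 2 * L ^ 2) / (6 * L * ε ^ 2) := by
      field_simp; ring
    rw [h1, h2]
    exact (div_le_div_iff_of_pos_right (by positivity)).mpr keyc
  -- final assembly
  have stepA : sSup ((fun y' => h (x (K+1)) y' + p (x (K+1)) - q y') '' Y)
      ≤ ψ (x (K+1)) + ε * Dy / 4 := by
    apply csSup_le (hYne.image _)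
    rintro _ ⟨v, hv, rfl⟩
    show h (x (K+1)) v + p (x (K+1)) - q v ≤ ψ (x (K+1)) + ε * Dy / 4
    have h1 : G (x (K+1)) v ≤ ψ (x (K+1)) :=
      le_csSup (bddG _ (hxmem (K+1))) (Set.mem_image_of_mem _ hv)
    have h2 : ‖v - y0‖ ≤ Dy := hdY v hv y0 hy0
    have h3 : a * ‖v - y0‖ ^ 2 ≤ a * Dy ^ 2 := by
      have h3a : ‖v - y0‖ ^ 2 ≤ Dy ^ 2 := by nlinarith [norm_nonneg (v - y0)]
      exact mul_le_mul_of_nonneg_left h3a hapos.le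
    have h4 : a * Dy ^ 2 = ε * Dy / 4 := by rw [ha]; field_simp
    have h1' : h (x (K+1)) v - a * ‖v - y0‖ ^ 2 + p (x (K+1)) - q v ≤ ψ (x (K+1)) := h1
    linarith
  have stepB : ψ (x 0) ≤ sSup ((fun y' => h xh0 y' + p xh0 - q y') '' Y) := by
    show sSup (G (x 0) '' Y) ≤ sSup ((fun y' => h xh0 y' + p xh0 - q y') '' Y)
    apply csSup_le (hYne.image _)
    rintro _ ⟨v, hv, rfl⟩
    show h (x 0) v - a * ‖v - y0‖ ^ 2 + p (x 0) - q v ≤ _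
    have h1 : h xh0 v + p xh0 - q v ≤ sSup ((fun y' => h xh0 y' + p xh0 - q y') '' Y) :=
      le_csSup (bddH xh0 hxh0) (Set.mem_image_of_mem _ hv)
    have h2 : (0:ℝ) ≤ a * ‖v - y0‖ ^ 2 := by positivity
    rw [hx0]
    linarith
  have hmul : 2 * εh0 ^ 2 * C ≤ 2 * εh0 ^ 2 * (L⁻¹ + 4 * Dy ^ 2 * L / ε ^ 2) :=
    mul_le_mul_of_nonneg_left hCbound (by positivity)
  clear_value a G ψ C
  linarith
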